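/- Let W̃ = W_aff ⋊ Ω be an extended quasi-Coxeter group where W_aff is a product of irreducible affine Weyl groups acting on a product apartment and Ω permutes the simple reflections Δ_aff. Suppose that for each irreducible factor the following holds (the main theorem of Rostami's conjugacy-classes paper): for any element of the factor's extended group that is not a translation, there is a sequence of simple reflections conjugating it, keeping length constant at each step, to an element whose length can then be strictly increased by one further conjugation. Then the same conclusion holds for any w ∈ W̃ that is not a translation: there exist s₁, …, s_n, s ∈ Δ_aff with ℓ(s_n ⋯ s₁ w s₁ ⋯ s_n) = ⋯ = ℓ(s₁ w s₁) = ℓ(w) and ℓ(s s_n ⋯ s₁ w s₁ ⋯ s_n s) > ℓ(w). -/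

import Mathlib

/-- Iterated conjugation of `w` by the (involutive) elements of the list `l`:
`conjSeq w [s₁, …, s_n] = s_n ⋯ s₁ w s₁ ⋯ s_n`. -/
def conjSeq {G : Type*} [Group G] (w : G) (l : List G) : G :=
  l.foldl (fun x u => u * x * u) w

/-- Let `W̃ = W_aff ⋊ Ω` be an extended quasi-Coxeter group, where
`W_aff = Π i, W_aff(Σ_i)` is a product of irreducible affine Weyl groups with simple
reflections `Δⁱ` and lengths `ℓ_i` (with `ℓ = Σ_i ℓ_i`), `Ω` permutes each embedded
`Δⁱ`, and the translation subset is `Tr = {w : ∀ i, w acts by translations on 𝒜_i}`.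
Suppose the main theorem of [roro] holds for each irreducible factor: any `w` that is
not a translation in the `i`-th factor can be conjugated by simple reflections of `Δⁱ`,
keeping the `i`-th length constant at each step, to an element whose `i`-th length is
then strictly increased by one further conjugation.  Then for every `w ∈ W̃` that is
not a translation, there are `s₁, …, s_n, s ∈ Δ_aff` with
`ℓ(s_n ⋯ s₁ w s₁ ⋯ s_n) = ⋯ = ℓ(s₁ w s₁) = ℓ(w)` and
`ℓ(s s_n ⋯ s₁ w s₁ ⋯ s_n s) > ℓ(w)`. -/
theorem stmt16 {ι : Type*} [Fintype ι] [DecidableEq ι]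
    {A : ι → Type*} [∀ i, Group (A i)] {Ω : Type*} [Group Ω]
    (φ : Ω →* MulAut (∀ i, A i))
    (Δ : ∀ i, Set (A i)) (ℓi : ∀ i, A i → ℕ)
    (TrI : ι → Set ((∀ i, A i) ⋊[φ] Ω)) (Tr : Set ((∀ i, A i) ⋊[φ] Ω))
    (hTr : ∀ w, w ∈ Tr ↔ ∀ i, w ∈ TrI i)
    (hinvΔ : ∀ i, ∀ s ∈ Δ i, s * s = 1)
    (hΩΔ : ∀ (ω : Ω) (i : ι), ∀ s ∈ Δ i,
      ∃ s' ∈ Δ i, φ ω (Pi.mulSingle i s) = Pi.mulSingle i s')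
    (hfactor : ∀ (i : ι) (w : (∀ i, A i) ⋊[φ] Ω), w ∉ TrI i →
      ∃ (l : List ((∀ i, A i) ⋊[φ] Ω)) (s : (∀ i, A i) ⋊[φ] Ω),
        (∀ u ∈ l, ∃ t ∈ Δ i, u = SemidirectProduct.inl (Pi.mulSingle i t)) ∧
        (∃ t ∈ Δ i, s = SemidirectProduct.inl (Pi.mulSingle i t)) ∧
        (∀ p, p <+: l → ℓi i ((conjSeq w p).left i) = ℓi i (w.left i)) ∧
        ℓi i ((s * conjSeq w l * s).left i) > ℓi i (w.left i)) :
    ∀ w : (∀ i, A i) ⋊[φ] Ω, w ∉ Tr →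
      ∃ (l : List ((∀ i, A i) ⋊[φ] Ω)) (s : (∀ i, A i) ⋊[φ] Ω),
        (∀ u ∈ l, ∃ i, ∃ t ∈ Δ i, u = SemidirectProduct.inl (Pi.mulSingle i t)) ∧
        (∃ i, ∃ t ∈ Δ i, s = SemidirectProduct.inl (Pi.mulSingle i t)) ∧
        (∀ p, p <+: l → (∑ i, ℓi i ((conjSeq w p).left i)) = ∑ i, ℓi i (w.left i)) ∧
        (∑ i, ℓi i ((s * conjSeq w l * s).left i)) > ∑ i, ℓi i (w.left i) := by
  intro w hw
  have : ∃ i, w ∉ TrI i := by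
    by_contra h
    push_neg at h
    exact hw ((hTr w).2 h)
  obtain ⟨i, hi⟩ := this
  obtain ⟨l, s, hl, hs, hpref, hinc⟩ := hfactor i w hi
  -- step lemma: conjugation by inl (mulSingle i t) fixes left j for j ≠ i
  have step : ∀ t ∈ Δ i, ∀ (v : (∀ i, A i) ⋊[φ] Ω) (j : ι), j ≠ i →
      ((SemidirectProduct.inl (Pi.mulSingle i t) : (∀ i, A i) ⋊[φ] Ω) * v *
        SemidirectProduct.inl (Pi.mulSingle i t)).left j = v.left j := by
    intro t ht v j hj
    obtain ⟨t', ht', hφ⟩ := hΩΔ v.right i t ht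
    simp [SemidirectProduct.mul_left, SemidirectProduct.mul_right, hφ,
      Pi.mulSingle_eq_of_ne hj]
  -- conjSeq by a list of such elements fixes left j for j ≠ i
  have key : ∀ (p : List ((∀ i, A i) ⋊[φ] Ω)),
      (∀ u ∈ p, ∃ t ∈ Δ i, u = SemidirectProduct.inl (Pi.mulSingle i t)) →
      ∀ (v : (∀ i, A i) ⋊[φ] Ω) (j : ι), j ≠ i →
      (conjSeq v p).left j = v.left j := by
    intro p
    induction p with
    | nil => intro _ v j _; rfl
    | cons u p ih =>
      intro hp v j hj
      obtain ⟨t, ht, rfl⟩ := hp u List.mem_cons_self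
      have : conjSeq v (SemidirectProduct.inl (Pi.mulSingle i t) :: p) =
          conjSeq (SemidirectProduct.inl (Pi.mulSingle i t) * v *
            SemidirectProduct.inl (Pi.mulSingle i t)) p := rfl
      rw [this, ih (fun u hu => hp u (List.mem_cons_of_mem _ hu)) _ j hj,
        step t ht v j hj]
  refine ⟨l, s, ?_, ?_, ?_, ?_⟩
  · exact fun u hu => ⟨i, hl u hu⟩
  · exact ⟨i, hs⟩
  · intro p hp
    refine Finset.sum_congr rfl fun j _ => ?_
    by_cases hj : j = i
    · subst hj; exact hpref p hp
    · rw [key p (fun u hu => hl u (hp.mem hu)) w j hj]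
  · obtain ⟨t, ht, rfl⟩ := hs
    refine Finset.sum_lt_sum (fun j _ => ?_) ⟨i, Finset.mem_univ i, hinc⟩
    by_cases hj : j = i
    · subst hj; exact le_of_lt hinc
    · rw [step t ht _ j hj, key l hl w j hj]
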